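/- arXiv:2302.01909 — 2 statements merged into one kernel-verified Lean document; each statement's English description precedes it below -/
import Mathlib

section
/- Let h = 4, n = 2, and let K = {id, (12)(34), (13)(24), (14)(23)} be the Klein group in S_4. Then U = K × {id} is a regular subgroup of G = S_4 × S_2, but U is not a symmetry group and not an anonymity group: for every social preference function F : (S_2)^4 → S_2 one has G(F) ≠ K × {id} and G_1(F) ≠ K × {id}. -/
open Equiv

/-- The action of `S_h × S_n` on preference profiles `p : Fin h → Perm (Fin n)`:
`(p^{(φ,ψ)})_i = ψ ∘ p_{φ⁻¹ i}`. -/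
def act {h n : ℕ} (g : Perm (Fin h) × Perm (Fin n)) (p : Fin h → Perm (Fin n)) :
    Fin h → Perm (Fin n) :=
  fun i => g.2 * p (g.1⁻¹ i)

/-- The symmetry group `G(F)` of a social preference function `F`. -/
def symGroup {h n : ℕ} (F : (Fin h → Perm (Fin n)) → Perm (Fin n)) :
    Subgroup (Perm (Fin h) × Perm (Fin n)) where
  carrier := {g | ∀ p, F (act g p) = g.2 * F p}
  one_mem' := by
    intro p
    have h1 : act (1 : Perm (Fin h) × Perm (Fin n)) p = p := by
      funext i; simp [act]
    rw [h1]; simp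
  mul_mem' := by
    intro a b ha hb p
    have hab : act (a * b) p = act a (act b p) := by
      funext i
      simp [act, mul_assoc]
    rw [hab, ha, hb, Prod.snd_mul, mul_assoc]
  inv_mem' := by
    intro a ha p
    have key := ha (act a⁻¹ p)
    have h1 : act a (act a⁻¹ p) = p := by
      funext i
      simp [act, mul_assoc]
    rw [h1] at key
    rw [key]
    simp [mul_assoc]

/-- The anonymity group `G₁(F) = G(F) ∩ (S_h × {id})`. -/
def anonGroup {h n : ℕ} (F : (Fin h → Perm (Fin n)) → Perm (Fin n)) :
    Subgroup (Perm (Fin h) × Perm (Fin n)) :=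
  symGroup F ⊓ Subgroup.prod ⊤ ⊥

/-- A subgroup `U ≤ S_h × S_n` is regular if every stabilized profile forces
the second component to be the identity. -/
def IsRegularSubgroup {h n : ℕ} (U : Subgroup (Perm (Fin h) × Perm (Fin n))) : Prop :=
  ∀ (p : Fin h → Perm (Fin n)) (g : Perm (Fin h) × Perm (Fin n)),
    g ∈ U → act g p = p → g.2 = 1


lemma perm2cases : ∀ x : Perm (Fin 2), x = 1 ∨ x = Equiv.swap 0 1 := by decide

lemma perm2trip : ∀ x y z : Perm (Fin 2), x = y ∨ x = z ∨ y = z := by decide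

lemma mem_symGroup {F : (Fin 4 → Perm (Fin 2)) → Perm (Fin 2)}
    {g : Perm (Fin 4) × Perm (Fin 2)} :
    g ∈ symGroup F ↔ ∀ p, F (act g p) = g.2 * F p := Iff.rfl

/-- Key combinatorial lemma: a Klein-invariant `F : (S₂)⁴ → S₂` is invariant under
(at least) one extra transposition of individuals, by pigeonhole on the three
weight-two orbits. -/
lemma key (F : (Fin 4 → Perm (Fin 2)) → Perm (Fin 2))
    (G1 : ∀ a b c d : Perm (Fin 2), F ![b, a, d, c] = F ![a, b, c, d])
    (G2 : ∀ a b c d : Perm (Fin 2), F ![c, d, a, b] = F ![a, b, c, d])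
    (G3 : ∀ a b c d : Perm (Fin 2), F ![d, c, b, a] = F ![a, b, c, d]) :
    (∀ a b c d : Perm (Fin 2), F ![a, c, b, d] = F ![a, b, c, d]) ∨
    (∀ a b c d : Perm (Fin 2), F ![a, d, c, b] = F ![a, b, c, d]) ∨
    (∀ a b c d : Perm (Fin 2), F ![a, b, d, c] = F ![a, b, c, d]) := by
  have h1 := G1 (Equiv.swap 0 1) 1 1 1
  have h2 := G2 (Equiv.swap 0 1) 1 1 1
  have h3 := G3 (Equiv.swap 0 1) 1 1 1
  have h4 := G1 1 (Equiv.swap 0 1) (Equiv.swap 0 1) (Equiv.swap 0 1)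
  have h5 := G2 1 (Equiv.swap 0 1) (Equiv.swap 0 1) (Equiv.swap 0 1)
  have h6 := G3 1 (Equiv.swap 0 1) (Equiv.swap 0 1) (Equiv.swap 0 1)
  have h7 := G2 (Equiv.swap 0 1) (Equiv.swap 0 1) 1 1
  have h8 := G1 (Equiv.swap 0 1) 1 (Equiv.swap 0 1) 1
  have h9 := G1 (Equiv.swap 0 1) 1 1 (Equiv.swap 0 1)
  rcases perm2trip (F ![Equiv.swap 0 1, Equiv.swap 0 1, 1, 1])
      (F ![Equiv.swap 0 1, 1, Equiv.swap 0 1, 1])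
      (F ![Equiv.swap 0 1, 1, 1, Equiv.swap 0 1]) with hab | hac | hbc
  · left
    intro a b c d
    rcases perm2cases a with rfl | rfl <;> rcases perm2cases b with rfl | rfl <;>
      rcases perm2cases c with rfl | rfl <;> rcases perm2cases d with rfl | rfl <;>
      simp only [h1, h2, h3, h4, h5, h6, h7, h8, h9, hab]
  · right; left
    intro a b c d
    rcases perm2cases a with rfl | rfl <;> rcases perm2cases b with rfl | rfl <;>
      rcases perm2cases c with rfl | rfl <;> rcases perm2cases d with rfl | rfl <;>
      simp only [h1, h2, h3, h4, h5, h6, h7, h8, h9, hac]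
  · right; right
    intro a b c d
    rcases perm2cases a with rfl | rfl <;> rcases perm2cases b with rfl | rfl <;>
      rcases perm2cases c with rfl | rfl <;> rcases perm2cases d with rfl | rfl <;>
      simp only [h1, h2, h3, h4, h5, h6, h7, h8, h9, hbc]

/-- If `K × {1}` is contained in the symmetry group of `F`, then the symmetry
group contains an extra element `(σ, 1)` with `σ ∉ K`. -/
lemma exists_extra (K : Subgroup (Perm (Fin 4)))
    (hK : (K : Set (Perm (Fin 4))) =
      {1, Equiv.swap 0 1 * Equiv.swap 2 3,
          Equiv.swap 0 2 * Equiv.swap 1 3,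
          Equiv.swap 0 3 * Equiv.swap 1 2})
    (F : (Fin 4 → Perm (Fin 2)) → Perm (Fin 2))
    (hle : K.prod (⊥ : Subgroup (Perm (Fin 2))) ≤ symGroup F) :
    ∃ σ : Perm (Fin 4), (σ, (1 : Perm (Fin 2))) ∈ symGroup F ∧ σ ∉ K := by
  have m1 : (Equiv.swap 0 1 * Equiv.swap 2 3 : Perm (Fin 4)) ∈ K := by
    rw [← SetLike.mem_coe, hK]
    simp only [Set.mem_insert_iff, Set.mem_singleton_iff]; tauto
  have m2 : (Equiv.swap 0 2 * Equiv.swap 1 3 : Perm (Fin 4)) ∈ K := by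
    rw [← SetLike.mem_coe, hK]
    simp only [Set.mem_insert_iff, Set.mem_singleton_iff]; tauto
  have m3 : (Equiv.swap 0 3 * Equiv.swap 1 2 : Perm (Fin 4)) ∈ K := by
    rw [← SetLike.mem_coe, hK]
    simp only [Set.mem_insert_iff, Set.mem_singleton_iff]; tauto
  have hp1 : ((Equiv.swap 0 1 * Equiv.swap 2 3 : Perm (Fin 4)), (1 : Perm (Fin 2))) ∈
      K.prod (⊥ : Subgroup (Perm (Fin 2))) :=
    Subgroup.mem_prod.mpr ⟨m1, Subgroup.mem_bot.mpr rfl⟩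
  have hs1 := mem_symGroup.mp (hle hp1)
  have hp2 : ((Equiv.swap 0 2 * Equiv.swap 1 3 : Perm (Fin 4)), (1 : Perm (Fin 2))) ∈
      K.prod (⊥ : Subgroup (Perm (Fin 2))) :=
    Subgroup.mem_prod.mpr ⟨m2, Subgroup.mem_bot.mpr rfl⟩
  have hs2 := mem_symGroup.mp (hle hp2)
  have hp3 : ((Equiv.swap 0 3 * Equiv.swap 1 2 : Perm (Fin 4)), (1 : Perm (Fin 2))) ∈
      K.prod (⊥ : Subgroup (Perm (Fin 2))) :=
    Subgroup.mem_prod.mpr ⟨m3, Subgroup.mem_bot.mpr rfl⟩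
  have hs3 := mem_symGroup.mp (hle hp3)
  have G1 : ∀ a b c d : Perm (Fin 2), F ![b, a, d, c] = F ![a, b, c, d] := by
    intro a b c d
    have h := hs1 ![a, b, c, d]
    rwa [one_mul,
      show act (Equiv.swap 0 1 * Equiv.swap 2 3, 1) ![a, b, c, d] = ![b, a, d, c] by
        funext i; fin_cases i <;> simp [act] <;> (congr 1) <;> decide] at h
  have G2 : ∀ a b c d : Perm (Fin 2), F ![c, d, a, b] = F ![a, b, c, d] := by
    intro a b c d
    have h := hs2 ![a, b, c, d]
    rwa [one_mul,
      show act (Equiv.swap 0 2 * Equiv.swap 1 3, 1) ![a, b, c, d] = ![c, d, a, b] by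
        funext i; fin_cases i <;> simp [act] <;> (congr 1) <;> decide] at h
  have G3 : ∀ a b c d : Perm (Fin 2), F ![d, c, b, a] = F ![a, b, c, d] := by
    intro a b c d
    have h := hs3 ![a, b, c, d]
    rwa [one_mul,
      show act (Equiv.swap 0 3 * Equiv.swap 1 2, 1) ![a, b, c, d] = ![d, c, b, a] by
        funext i; fin_cases i <;> simp [act] <;> (congr 1) <;> decide] at h
  have hp : ∀ p : Fin 4 → Perm (Fin 2), p = ![p 0, p 1, p 2, p 3] := by
    intro p; funext i; fin_cases i <;> rfl
  have notK : ∀ σ : Perm (Fin 4),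
      σ ∉ ({1, Equiv.swap 0 1 * Equiv.swap 2 3, Equiv.swap 0 2 * Equiv.swap 1 3,
        Equiv.swap 0 3 * Equiv.swap 1 2} : Set (Perm (Fin 4))) → σ ∉ K := by
    intro σ hσ h
    exact hσ (hK ▸ h)
  rcases key F G1 G2 G3 with B | B | B
  · refine ⟨Equiv.swap 1 2, mem_symGroup.mpr fun p => ?_, notK _ (by
      simp only [Set.mem_insert_iff, Set.mem_singleton_iff]; decide)⟩
    rw [show ((Equiv.swap 1 2 : Perm (Fin 4)), (1 : Perm (Fin 2))).2 = 1 from rfl, one_mul,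
      show act ((Equiv.swap 1 2 : Perm (Fin 4)), 1) p = ![p 0, p 2, p 1, p 3] by
        funext i; fin_cases i <;> simp [act] <;> (congr 1) <;> decide]
    conv_rhs => rw [hp p]
    exact B _ _ _ _
  · refine ⟨Equiv.swap 1 3, mem_symGroup.mpr fun p => ?_, notK _ (by
      simp only [Set.mem_insert_iff, Set.mem_singleton_iff]; decide)⟩
    rw [show ((Equiv.swap 1 3 : Perm (Fin 4)), (1 : Perm (Fin 2))).2 = 1 from rfl, one_mul,
      show act ((Equiv.swap 1 3 : Perm (Fin 4)), 1) p = ![p 0, p 3, p 2, p 1] by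
        funext i; fin_cases i <;> simp [act] <;> (congr 1) <;> decide]
    conv_rhs => rw [hp p]
    exact B _ _ _ _
  · refine ⟨Equiv.swap 2 3, mem_symGroup.mpr fun p => ?_, notK _ (by
      simp only [Set.mem_insert_iff, Set.mem_singleton_iff]; decide)⟩
    rw [show ((Equiv.swap 2 3 : Perm (Fin 4)), (1 : Perm (Fin 2))).2 = 1 from rfl, one_mul,
      show act ((Equiv.swap 2 3 : Perm (Fin 4)), 1) p = ![p 0, p 1, p 3, p 2] by
        funext i; fin_cases i <;> simp [act] <;> (congr 1) <;> decide]
    conv_rhs => rw [hp p]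
    exact B _ _ _ _

/-- For `(h,n) = (4,2)` and `K` the Klein group in `S_4`, the subgroup
`K × {id}` is regular but is neither a symmetry group nor an anonymity group. -/
theorem klein_not_symmetry_not_anonymity (K : Subgroup (Perm (Fin 4)))
    (hK : (K : Set (Perm (Fin 4))) =
      {1, Equiv.swap 0 1 * Equiv.swap 2 3,
          Equiv.swap 0 2 * Equiv.swap 1 3,
          Equiv.swap 0 3 * Equiv.swap 1 2}) :
    IsRegularSubgroup (K.prod (⊥ : Subgroup (Perm (Fin 2)))) ∧
    ∀ F : (Fin 4 → Perm (Fin 2)) → Perm (Fin 2),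
      symGroup F ≠ K.prod (⊥ : Subgroup (Perm (Fin 2))) ∧
      anonGroup F ≠ K.prod (⊥ : Subgroup (Perm (Fin 2))) := by
  constructor
  · intro p g hg _
    exact Subgroup.mem_bot.mp (Subgroup.mem_prod.mp hg).2
  · intro F
    constructor
    · intro hsym
      obtain ⟨σ, hmem, hnK⟩ := exists_extra K hK F (le_of_eq hsym.symm)
      rw [hsym] at hmem
      exact hnK (Subgroup.mem_prod.mp hmem).1
    · intro hanon
      have hle : K.prod (⊥ : Subgroup (Perm (Fin 2))) ≤ symGroup F :=
        le_trans (le_of_eq hanon.symm) inf_le_left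
      obtain ⟨σ, hmem, hnK⟩ := exists_extra K hK F hle
      have hmem2 : (σ, (1 : Perm (Fin 2))) ∈ anonGroup F :=
        Subgroup.mem_inf.mpr ⟨hmem,
          Subgroup.mem_prod.mpr ⟨trivial, Subgroup.mem_bot.mpr rfl⟩⟩
      rw [hanon] at hmem2
      exact hnK (Subgroup.mem_prod.mp hmem2).1
end

section
/- Let U, V ≤ G = S_h × S_n be subgroups such that the subgroup generated by U and V is regular. If U ≤_P V (every U-orbit on P is contained in the corresponding V-orbit), then every V-symmetric social preference function is U-symmetric, i.e. F^V ⊆ F^U. Consequently, if moreover V ≤_P U, then F^V = F^U. -/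
open Equiv

/-- `F` is `U`-symmetric: `F (p^g) = g.2 * F p` for all `g ∈ U`. -/
def USymmetric {h n : ℕ} (U : Subgroup (Perm (Fin h) × Perm (Fin n)))
    (F : (Fin h → Perm (Fin n)) → Perm (Fin n)) : Prop :=
  ∀ (p : Fin h → Perm (Fin n)) (g : Perm (Fin h) × Perm (Fin n)),
    g ∈ U → F (act g p) = g.2 * F p

/-- `U ≤_P V`: every `U`-orbit on profiles is contained in the corresponding `V`-orbit. -/
def orbLE {h n : ℕ} (U V : Subgroup (Perm (Fin h) × Perm (Fin n))) : Prop :=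
  ∀ (p : Fin h → Perm (Fin n)) (g : Perm (Fin h) × Perm (Fin n)),
    g ∈ U → ∃ g' ∈ V, act g p = act g' p

lemma act_mul {h n : ℕ} (a b : Perm (Fin h) × Perm (Fin n)) (p : Fin h → Perm (Fin n)) :
    act (a * b) p = act a (act b p) := by
  funext i
  simp [act, mul_assoc, mul_inv_rev]

lemma key_s17 {h n : ℕ} (U V : Subgroup (Perm (Fin h) × Perm (Fin n)))
    (hreg : IsRegularSubgroup (U ⊔ V)) (hUV : orbLE U V)
    (F : (Fin h → Perm (Fin n)) → Perm (Fin n)) (hF : USymmetric V F) :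
    USymmetric U F := by
  intro p g hg
  obtain ⟨g', hg', heq⟩ := hUV p g hg
  have hmem : g'⁻¹ * g ∈ U ⊔ V :=
    mul_mem (inv_mem (Subgroup.mem_sup_right hg')) (Subgroup.mem_sup_left hg)
  have hfix : act (g'⁻¹ * g) p = p := by
    rw [act_mul, heq, ← act_mul, inv_mul_cancel]
    funext i; simp [act]
  have h2 : g.2 = g'.2 := by
    have := hreg p _ hmem hfix
    have : g'.2⁻¹ * g.2 = 1 := this
    group at this ⊢
    exact (eq_of_inv_mul_eq_one this).symm
  rw [heq, hF p g' hg', h2]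

/-- If `⟨U,V⟩` is regular and `U ≤_P V`, then every `V`-symmetric SPF is
`U`-symmetric; if moreover `V ≤_P U`, the two symmetry classes coincide. -/
theorem orbit_containment_symmetric (h n : ℕ) (hh : 2 ≤ h) (hn : 2 ≤ n)
    (U V : Subgroup (Perm (Fin h) × Perm (Fin n)))
    (hreg : IsRegularSubgroup (U ⊔ V)) (hUV : orbLE U V) :
    (∀ F : (Fin h → Perm (Fin n)) → Perm (Fin n),
        USymmetric V F → USymmetric U F) ∧
    (orbLE V U →
      ∀ F : (Fin h → Perm (Fin n)) → Perm (Fin n),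
        USymmetric V F ↔ USymmetric U F) := by
  have hreg' : IsRegularSubgroup (V ⊔ U) := by rwa [sup_comm]
  exact ⟨fun F => key_s17 U V hreg hUV F,
    fun hVU F => ⟨fun hF => key_s17 U V hreg hUV F hF, fun hF => key_s17 V U hreg' hVU F hF⟩⟩
end
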